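/- Let k and m be nonnegative integers and f : ℝ^{k+1} → ℝ a function such that there exist functions g₁, …, g_{m+1} : (ℝ^{k+1})^m → ℝ with f(x₁ + ⋯ + x_{m+1}) = Σ_{i=1}^{m+1} g_i(x₁, …, x_{i−1}, x_{i+1}, …, x_{m+1}) for all x₁, …, x_{m+1} ∈ ℝ^{k+1} (each g_i omitting the variable x_i). If f is continuous at some point x* ∈ ℝ^{k+1}, then f is an ordinary polynomial in k+1 real variables of total degree at most m. -/

import Mathlib

open scoped BigOperators
open fwdDiff Polynomial

variable {V : Type*} [AddCommGroup V]

lemma aich_fwdDiff_zero : ∀ (ℓ : ℕ) (f : V → ℝ)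
    (g : Fin (ℓ + 1) → (Fin (ℓ + 1) → V) → ℝ),
    (∀ (i : Fin (ℓ + 1)) (x y : Fin (ℓ + 1) → V),
      (∀ j : Fin (ℓ + 1), j ≠ i → x j = y j) → g i x = g i y) →
    (∀ x : Fin (ℓ + 1) → V, f (∑ j, x j) = ∑ i, g i x) →
    ∀ (v a : V), (Δ_[v])^[ℓ + 1] f a = 0 := by
  intro ℓ
  induction ℓ with
  | zero =>
    intro f g hg heq v a
    have hfc : ∀ w : V, f w = g 0 (fun _ => w) := by
      intro w
      have := heq (fun _ => w)
      simpa using this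
    have hgc : ∀ w w' : V, g 0 (fun _ => w) = g 0 (fun _ => w') := by
      intro w w'
      apply hg
      intro j hj
      exact absurd (Fin.ext (by omega)) hj
    show f (a + v) - f a = 0
    rw [hfc (a + v), hfc a, hgc (a + v) a, sub_self]
  | succ ℓ IH =>
    intro f g hg heq v a
    set g' : Fin (ℓ + 1) → (Fin (ℓ + 1) → V) → ℝ :=
      fun i x => g i.castSucc (Fin.snoc x v) - g i.castSucc (Fin.snoc x (0 : V)) with hg'def
    have hg' : ∀ (i : Fin (ℓ + 1)) (x y : Fin (ℓ + 1) → V),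
        (∀ j : Fin (ℓ + 1), j ≠ i → x j = y j) → g' i x = g' i y := by
      intro i x y hxy
      have h1 : ∀ w : V, g i.castSucc (Fin.snoc x w) = g i.castSucc (Fin.snoc y w) := by
        intro w
        apply hg
        intro j hj
        rcases Fin.eq_castSucc_or_eq_last j with ⟨j', rfl⟩ | rfl
        · simp only [Fin.snoc_castSucc]
          apply hxy
          intro hj'
          exact hj (by rw [hj'])
        · simp
      simp only [hg'def, h1 v, h1 0]
    have heq' : ∀ x : Fin (ℓ + 1) → V, (Δ_[v] f) (∑ j, x j) = ∑ i, g' i x := by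
      intro x
      have hsum : ∀ w : V, (∑ j, Fin.snoc x w j) = (∑ j, x j) + w := by
        intro w
        rw [Fin.sum_univ_castSucc (n := ℓ + 1)]
        simp
      have e1 := heq (Fin.snoc x v)
      have e2 := heq (Fin.snoc x (0 : V))
      rw [hsum v] at e1
      rw [hsum 0, add_zero] at e2
      have hlast : g (Fin.last (ℓ + 1)) (Fin.snoc x v) =
          g (Fin.last (ℓ + 1)) (Fin.snoc x (0 : V)) := by
        apply hg
        intro j hj
        rcases Fin.eq_castSucc_of_ne_last hj with ⟨j', rfl⟩
        simp
      show f ((∑ j, x j) + v) - f (∑ j, x j) = _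
      rw [e1, e2,
        Fin.sum_univ_castSucc (n := ℓ + 1) (f := fun i => g i (Fin.snoc x v)),
        Fin.sum_univ_castSucc (n := ℓ + 1) (f := fun i => g i (Fin.snoc x (0 : V))), hlast]
      simp only [hg'def]
      rw [Finset.sum_sub_distrib]
      ring
    have hit : (Δ_[v])^[ℓ + 1 + 1] f a = (Δ_[v])^[ℓ + 1] (Δ_[v] f) a := by
      rw [Function.iterate_succ_apply]
    rw [hit]
    exact IH (Δ_[v] f) g' hg' heq' v a

lemma iter_fwdDiff_zero_fun (s : ℝ) : ∀ j : ℕ, (Δ_[s])^[j] (fun _ => (0:ℝ)) = fun _ => 0 := by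
  intro j
  induction j with
  | zero => rfl
  | succ j IH =>
    rw [Function.iterate_succ_apply]
    have : Δ_[s] (fun _ => (0:ℝ)) = fun _ => (0:ℝ) := by
      funext t; simp [fwdDiff]
    rw [this, IH]

lemma iter_fwdDiff_vanish_ge {m : ℕ} {φ : ℝ → ℝ}
    (H : ∀ s t : ℝ, (Δ_[s])^[m + 1] φ t = 0) {k : ℕ} (hk : m + 1 ≤ k) (s t : ℝ) :
    (Δ_[s])^[k] φ t = 0 := by
  obtain ⟨j, rfl⟩ := Nat.exists_eq_add_of_le hk
  rw [add_comm, Function.iterate_add_apply]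
  have : (Δ_[s])^[m + 1] φ = fun _ => (0:ℝ) := funext (H s)
  rw [this, iter_fwdDiff_zero_fun]

lemma newton_eval {m : ℕ} {φ : ℝ → ℝ}
    (H : ∀ s t : ℝ, (Δ_[s])^[m + 1] φ t = 0) (b h : ℝ) (n : ℕ) :
    φ (b + n * h) = ∑ k ∈ Finset.range (m + 1), (n.choose k : ℝ) * (Δ_[h])^[k] φ b := by
  have base := shift_eq_sum_fwdDiff_iter h φ n b
  rw [nsmul_eq_mul] at base
  have hNn : Finset.range (n + 1) ⊆ Finset.range (n + m + 1) := by
    apply Finset.range_subset_range.2; omega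
  have hNm : Finset.range (m + 1) ⊆ Finset.range (n + m + 1) := by
    apply Finset.range_subset_range.2; omega
  rw [base]
  have e1 : ∑ k ∈ Finset.range (n + 1), n.choose k • (Δ_[h])^[k] φ b
      = ∑ k ∈ Finset.range (n + m + 1), n.choose k • (Δ_[h])^[k] φ b := by
    apply Finset.sum_subset hNn
    intro k _ hk
    have : n < k := by simpa using hk
    rw [Nat.choose_eq_zero_of_lt this, zero_smul]
  have e2 : ∑ k ∈ Finset.range (m + 1), (n.choose k : ℝ) * (Δ_[h])^[k] φ b
      = ∑ k ∈ Finset.range (n + m + 1), (n.choose k : ℝ) * (Δ_[h])^[k] φ b := by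
    apply Finset.sum_subset hNm
    intro k _ hk
    have hk' : m + 1 ≤ k := by simp only [Finset.mem_range, not_lt] at hk; omega
    rw [iter_fwdDiff_vanish_ge H hk', mul_zero]
  rw [e1, e2]
  apply Finset.sum_congr rfl
  intro k _
  rw [nsmul_eq_mul]

/-- Newton interpolation polynomial at scale `1/N` based at `b`. -/
noncomputable def newtonPoly (m : ℕ) (φ : ℝ → ℝ) (b : ℝ) (N : ℕ) : ℝ[X] :=
  (∑ k ∈ Finset.range (m + 1),
      Polynomial.C ((Δ_[((N:ℝ))⁻¹])^[k] φ b / (k.factorial : ℝ)) * descPochhammer ℝ k).comp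
    (Polynomial.C (N : ℝ) * (Polynomial.X - Polynomial.C b))

lemma newtonPoly_natDegree_le (m : ℕ) (φ : ℝ → ℝ) (b : ℝ) (N : ℕ) :
    (newtonPoly m φ b N).natDegree ≤ m := by
  have h1 : (Polynomial.C (N : ℝ) * (Polynomial.X - Polynomial.C b)).natDegree ≤ 1 := by
    refine le_trans Polynomial.natDegree_mul_le ?_
    simp [Polynomial.natDegree_X_sub_C]
  have h2 : (∑ k ∈ Finset.range (m + 1),
      Polynomial.C ((Δ_[((N:ℝ))⁻¹])^[k] φ b / (k.factorial : ℝ)) * descPochhammer ℝ k).natDegree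
      ≤ m := by
    refine le_trans (Polynomial.natDegree_sum_le _ _) ?_
    refine (Finset.fold_max_le m).2 ⟨by omega, ?_⟩
    intro k hk
    simp only [Function.comp_apply]
    refine le_trans Polynomial.natDegree_mul_le ?_
    simp only [Polynomial.natDegree_C, zero_add]
    rw [descPochhammer_natDegree]
    simpa using Nat.lt_succ_iff.mp (Finset.mem_range.1 hk)
  unfold newtonPoly
  refine le_trans Polynomial.natDegree_comp_le (le_trans (Nat.mul_le_mul h2 h1) (by omega))

lemma newtonPoly_eval {m : ℕ} {φ : ℝ → ℝ}
    (H : ∀ s t : ℝ, (Δ_[s])^[m + 1] φ t = 0) (b : ℝ) {N : ℕ} (hN : 0 < N) (j : ℕ) :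
    (newtonPoly m φ b N).eval (b + (j : ℝ) / N) = φ (b + (j : ℝ) / N) := by
  have hNR : (N : ℝ) ≠ 0 := Nat.cast_ne_zero.2 hN.ne'
  unfold newtonPoly
  rw [Polynomial.eval_comp]
  have harg : (Polynomial.C (N:ℝ) * (Polynomial.X - Polynomial.C b)).eval (b + (j:ℝ) / N)
      = (j : ℝ) := by
    simp only [Polynomial.eval_mul, Polynomial.eval_C, Polynomial.eval_sub, Polynomial.eval_X]
    field_simp
    ring
  rw [harg, Polynomial.eval_finset_sum]
  have hterm : ∀ k ∈ Finset.range (m + 1),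
      (Polynomial.C ((Δ_[((N:ℝ))⁻¹])^[k] φ b / (k.factorial : ℝ)) * descPochhammer ℝ k).eval
        (j : ℝ) = (j.choose k : ℝ) * (Δ_[((N:ℝ))⁻¹])^[k] φ b := by
    intro k _
    rw [Polynomial.eval_mul, Polynomial.eval_C, descPochhammer_eval_eq_descFactorial,
      Nat.descFactorial_eq_factorial_mul_choose]
    have hfac : (k.factorial : ℝ) ≠ 0 := Nat.cast_ne_zero.2 k.factorial_ne_zero
    push_cast
    field_simp
  rw [Finset.sum_congr rfl hterm, ← newton_eval H b ((N:ℝ))⁻¹ j, div_eq_mul_inv]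

lemma poly_eq_of_nat_shift {b : ℝ} {p q : Polynomial ℝ}
    (h : ∀ j : ℕ, p.eval (b + (j:ℝ)) = q.eval (b + (j:ℝ))) : p = q := by
  apply Polynomial.eq_of_infinite_eval_eq
  apply Set.infinite_of_injective_forall_mem (f := fun j : ℕ => b + (j:ℝ))
  · intro i j hij
    have : (i:ℝ) = j := by simpa using hij
    exact_mod_cast this
  · intro j
    exact h j

lemma newton_rat {m : ℕ} {φ : ℝ → ℝ} (H : ∀ s t : ℝ, (Δ_[s])^[m + 1] φ t = 0) :
    ∃ q : Polynomial ℝ, q.natDegree ≤ m ∧ ∀ t : ℚ, φ t = q.eval (t : ℝ) := by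
  have hstep1 : ∀ (b : ℝ) (N : ℕ), 0 < N → newtonPoly m φ b N = newtonPoly m φ b 1 := by
    intro b N hN
    apply poly_eq_of_nat_shift (b := b)
    intro j
    have hNR : (N : ℝ) ≠ 0 := Nat.cast_ne_zero.2 hN.ne'
    have e1 : (b + (j:ℝ)) = b + ((j * N : ℕ) : ℝ) / N := by push_cast; field_simp
    have e2 : (b + (j:ℝ)) = b + ((j : ℕ) : ℝ) / (1:ℕ) := by push_cast; ring
    calc (newtonPoly m φ b N).eval (b + (j:ℝ))
        = φ (b + ((j * N : ℕ) : ℝ) / N) := by rw [e1]; exact newtonPoly_eval H b hN (j * N)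
      _ = φ (b + ((j : ℕ) : ℝ) / (1:ℕ)) := by rw [← e1, e2]
      _ = (newtonPoly m φ b 1).eval (b + ((j : ℕ) : ℝ) / (1:ℕ)) :=
          (newtonPoly_eval H b Nat.one_pos j).symm
      _ = (newtonPoly m φ b 1).eval (b + (j:ℝ)) := by rw [← e2]
  have hstep2 : ∀ c : ℕ, newtonPoly m φ (-(c:ℝ)) 1 = newtonPoly m φ 0 1 := by
    intro c
    apply poly_eq_of_nat_shift (b := (0:ℝ))
    intro j
    have e1 : ((0:ℝ) + (j:ℝ)) = -(c:ℝ) + ((j + c : ℕ) : ℝ) / (1:ℕ) := by push_cast; ring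
    have e2 : ((0:ℝ) + (j:ℝ)) = (0:ℝ) + ((j : ℕ) : ℝ) / (1:ℕ) := by push_cast; ring
    calc (newtonPoly m φ (-(c:ℝ)) 1).eval ((0:ℝ) + (j:ℝ))
        = φ (-(c:ℝ) + ((j + c : ℕ) : ℝ) / (1:ℕ)) := by
          rw [e1]; exact newtonPoly_eval H (-(c:ℝ)) Nat.one_pos (j + c)
      _ = φ ((0:ℝ) + ((j : ℕ) : ℝ) / (1:ℕ)) := by rw [← e1, e2]
      _ = (newtonPoly m φ 0 1).eval ((0:ℝ) + ((j : ℕ) : ℝ) / (1:ℕ)) :=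
          (newtonPoly_eval H 0 Nat.one_pos j).symm
      _ = (newtonPoly m φ 0 1).eval ((0:ℝ) + (j:ℝ)) := by rw [← e2]
  refine ⟨newtonPoly m φ 0 1, newtonPoly_natDegree_le m φ 0 1, ?_⟩
  intro t
  set c : ℕ := t.num.natAbs with hc
  set N : ℕ := t.den with hNdef
  have hN : 0 < N := t.pos
  have hnonneg : 0 ≤ t.num + (c : ℤ) * N := by
    have h1 : -t.num ≤ (c : ℤ) := by
      have := Int.le_natAbs (a := -t.num)
      simpa [hc] using this
    have h2 : (c : ℤ) * 1 ≤ (c : ℤ) * N := by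
      apply mul_le_mul_of_nonneg_left _ (Int.natCast_nonneg c)
      exact_mod_cast hN
    omega
  set j : ℕ := (t.num + (c : ℤ) * N).toNat with hj
  have hjcast : (j : ℤ) = t.num + (c : ℤ) * N := Int.toNat_of_nonneg hnonneg
  have hkey : (t : ℝ) = -(c:ℝ) + (j : ℝ) / N := by
    have hdenR : ((N:ℕ) : ℝ) ≠ 0 := Nat.cast_ne_zero.2 hN.ne'
    have hjR : (j : ℝ) = (t.num : ℝ) + (c : ℝ) * N := by
      have := congrArg (fun z : ℤ => (z : ℝ)) hjcast
      push_cast at this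
      exact this
    rw [Rat.cast_def, hjR]
    field_simp
    rw [hNdef]; ring
  rw [hkey, ← hstep2 c, ← hstep1 (-(c:ℝ)) N hN]
  exact (newtonPoly_eval H (-(c:ℝ)) hN j).symm

section LineTransfer

variable {E : Type*} [AddCommGroup E] [Module ℝ E]

lemma line_iter : ∀ (j : ℕ) (f : E → ℝ) (a v : E) (s t : ℝ),
    (Δ_[s])^[j] (fun u : ℝ => f (a + u • v)) t = (Δ_[s • v])^[j] f (a + t • v) := by
  intro j
  induction j with
  | zero => intro f a v s t; rfl
  | succ j IH =>
    intro f a v s t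
    rw [Function.iterate_succ_apply, Function.iterate_succ_apply]
    have hstep : Δ_[s] (fun u : ℝ => f (a + u • v)) = fun u : ℝ => (Δ_[s • v] f) (a + u • v) := by
      funext u
      show f (a + (u + s) • v) - f (a + u • v) = f ((a + u • v) + s • v) - f (a + u • v)
      rw [add_smul, add_assoc]
    rw [hstep]
    exact IH (Δ_[s • v] f) a v s t

lemma line_poly_rat {m : ℕ} {f : E → ℝ}
    (hd : ∀ v a : E, (Δ_[v])^[m + 1] f a = 0) (a v : E) :
    ∃ q : Polynomial ℝ, q.natDegree ≤ m ∧ ∀ t : ℚ, f (a + (t : ℝ) • v) = q.eval (t : ℝ) := by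
  obtain ⟨q, h1, h2⟩ := newton_rat (φ := fun u : ℝ => f (a + u • v))
    (fun s t => by rw [line_iter]; exact hd _ _)
  exact ⟨q, h1, fun t => h2 t⟩

end LineTransfer

/-- Crude bound for a polynomial's values on `[-1,1]` by the sum of absolute values of
coefficients. -/
noncomputable def coeffBound (p : Polynomial ℝ) : ℝ :=
  ∑ i ∈ Finset.range (p.natDegree + 1), |p.coeff i|

lemma coeffBound_nonneg (p : Polynomial ℝ) : 0 ≤ coeffBound p :=
  Finset.sum_nonneg fun _ _ => abs_nonneg _

lemma abs_eval_le_coeffBound (p : Polynomial ℝ) {t : ℝ} (ht : |t| ≤ 1) :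
    |p.eval t| ≤ coeffBound p := by
  rw [Polynomial.eval_eq_sum_range]
  refine (Finset.abs_sum_le_sum_abs _ _).trans ?_
  apply Finset.sum_le_sum
  intro i _
  rw [abs_mul, abs_pow]
  calc |p.coeff i| * |t| ^ i ≤ |p.coeff i| * 1 := by
        apply mul_le_mul_of_nonneg_left _ (abs_nonneg _)
        exact pow_le_one₀ (abs_nonneg _) ht
    _ = |p.coeff i| := mul_one _

lemma abs_eval_sub_eval_zero_le (p : Polynomial ℝ) {t : ℝ} (ht : |t| ≤ 1) :
    |p.eval t - p.eval 0| ≤ coeffBound p.divX * |t| := by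
  have h := Polynomial.X_mul_divX_add p
  have h1 : p.eval t = t * (p.divX.eval t) + p.coeff 0 := by
    have h1' := congrArg (Polynomial.eval t) h
    simp only [Polynomial.eval_add, Polynomial.eval_mul, Polynomial.eval_X,
      Polynomial.eval_C] at h1'
    rw [← h1', mul_comm]
  have h2 : p.eval 0 = p.coeff 0 := (Polynomial.coeff_zero_eq_eval_zero p).symm
  rw [h1, h2, add_sub_cancel_right, abs_mul, mul_comm]
  apply mul_le_mul_of_nonneg_right (abs_eval_le_coeffBound _ ht) (abs_nonneg _)

lemma lagrange_bound (m : ℕ) : ∃ C : ℝ, 0 ≤ C ∧ ∀ q : Polynomial ℝ, q.natDegree ≤ m →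
    ∀ M : ℝ, (∀ i ∈ Finset.range (m + 2), |q.eval ((i : ℝ) / (m + 1))| ≤ M) →
    ∀ t : ℝ, |t| ≤ 1 → |q.eval t - q.eval 0| ≤ C * M * |t| := by
  set v : ℕ → ℝ := fun i => (i : ℝ) / ((m : ℝ) + 1) with hv
  set s : Finset ℕ := Finset.range (m + 2) with hs
  have hm1 : (0:ℝ) < (m:ℝ) + 1 := by positivity
  have hinj : Set.InjOn v ↑s := by
    intro i _ j _ hij
    simp only [hv] at hij
    field_simp at hij
    exact_mod_cast hij
  refine ⟨∑ i ∈ s, coeffBound (Lagrange.basis s v i).divX,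
    Finset.sum_nonneg fun _ _ => coeffBound_nonneg _, ?_⟩
  intro q hq M hM t ht
  have hM0 : 0 ≤ M := le_trans (abs_nonneg _) (hM 0 (by simp [hs]))
  have hdeg : q.degree < (s.card : WithBot ℕ) := by
    refine lt_of_le_of_lt (Polynomial.degree_le_natDegree) ?_
    rw [hs, Finset.card_range]
    exact_mod_cast lt_of_le_of_lt hq (by omega)
  have hrep := Lagrange.eq_interpolate hinj hdeg
  have hqt : ∀ x : ℝ, q.eval x = ∑ i ∈ s, q.eval (v i) * (Lagrange.basis s v i).eval x := by
    intro x
    conv_lhs => rw [hrep]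
    rw [Lagrange.interpolate_apply, Polynomial.eval_finset_sum]
    apply Finset.sum_congr rfl
    intro i _
    rw [Polynomial.eval_mul, Polynomial.eval_C]
  have hMle : ∀ i ∈ s, |q.eval (v i)| ≤ M := by
    intro i hi
    exact hM i (by simpa [hs] using hi)
  calc |q.eval t - q.eval 0|
      = |∑ i ∈ s, q.eval (v i) * ((Lagrange.basis s v i).eval t
          - (Lagrange.basis s v i).eval 0)| := by
        rw [hqt t, hqt 0, ← Finset.sum_sub_distrib]
        congr 1
        apply Finset.sum_congr rfl
        intro i _
        rw [mul_sub]
    _ ≤ ∑ i ∈ s, |q.eval (v i) * ((Lagrange.basis s v i).eval t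
          - (Lagrange.basis s v i).eval 0)| := Finset.abs_sum_le_sum_abs _ _
    _ ≤ ∑ i ∈ s, coeffBound (Lagrange.basis s v i).divX * (M * |t|) := by
        apply Finset.sum_le_sum
        intro i hi
        rw [abs_mul]
        have h1 := abs_eval_sub_eval_zero_le (Lagrange.basis s v i) ht
        have h2 := hMle i hi
        calc |q.eval (v i)| * |(Lagrange.basis s v i).eval t - (Lagrange.basis s v i).eval 0|
            ≤ M * (coeffBound (Lagrange.basis s v i).divX * |t|) :=
              mul_le_mul h2 h1 (abs_nonneg _) hM0
          _ = coeffBound (Lagrange.basis s v i).divX * (M * |t|) := by ring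
    _ = (∑ i ∈ s, coeffBound (Lagrange.basis s v i).divX) * (M * |t|) :=
        (Finset.sum_mul _ _ _).symm
    _ = (∑ i ∈ s, coeffBound (Lagrange.basis s v i).divX) * M * |t| := by ring

section Continuity

variable {E : Type*} [NormedAddCommGroup E] [NormedSpace ℝ E]

lemma continuousAt_of_bounded {m : ℕ} {f : E → ℝ}
    (hd : ∀ v a : E, (Δ_[v])^[m + 1] f a = 0) (a : E) (r M : ℝ) (hr : 0 < r)
    (hb : ∀ y : E, dist y a ≤ r → |f y| ≤ M) : ContinuousAt f a := by
  obtain ⟨C, hC0, hC⟩ := lagrange_bound m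
  have hM0 : 0 ≤ M := le_trans (abs_nonneg _) (hb a (by simp [hr.le]))
  set K : ℝ := C * M * (2 / r) with hK
  have hK0 : 0 ≤ K := by positivity
  have key : ∀ u : E, ‖u‖ ≤ r / 2 → |f (a + u) - f a| ≤ K * ‖u‖ := by
    intro u hu
    rcases eq_or_ne u 0 with rfl | hu0
    · simp [hK0]
    · have hun : 0 < ‖u‖ := norm_pos_iff.2 hu0
      have hlt : ‖u‖ / r < 2 * ‖u‖ / r := by
        rw [div_lt_div_iff₀ hr hr]
        nlinarith
      obtain ⟨t, ht1, ht2⟩ := exists_rat_btwn hlt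
      have htpos : 0 < (t : ℝ) := lt_trans (by positivity) ht1
      have ht1' : (t : ℝ) ≤ 1 := by
        refine le_of_lt (lt_of_lt_of_le ht2 ?_)
        rw [div_le_one hr]
        linarith
      set v : E := ((t : ℝ))⁻¹ • u with hv
      have hvnorm : ‖v‖ ≤ r := by
        rw [hv, norm_smul, Real.norm_eq_abs, abs_inv, abs_of_pos htpos]
        rw [inv_mul_le_iff₀ htpos]
        rw [div_lt_iff₀ hr] at ht1
        linarith [ht1]
      obtain ⟨q, hqdeg, hq⟩ := line_poly_rat hd a v
      have hnodes : ∀ i ∈ Finset.range (m + 2), |q.eval ((i : ℝ) / ((m : ℝ) + 1))| ≤ M := by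
        intro i hi
        have hi' : i ≤ m + 1 := by simpa [Nat.lt_succ_iff] using Finset.mem_range.1 hi
        set si : ℚ := (i : ℚ) / ((m : ℚ) + 1) with hsi
        have hsiR : ((si : ℚ) : ℝ) = (i : ℝ) / ((m : ℝ) + 1) := by
          rw [hsi]; push_cast; ring
        have hs'1 : (0:ℝ) ≤ (i : ℝ) / ((m : ℝ) + 1) := by positivity
        have hs'2 : (i : ℝ) / ((m : ℝ) + 1) ≤ 1 := by
          rw [div_le_one (by positivity)]
          exact_mod_cast hi'
        have heval := hq si
        rw [hsiR] at heval
        rw [← heval]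
        apply hb
        rw [dist_eq_norm, add_sub_cancel_left, norm_smul, Real.norm_eq_abs,
          abs_of_nonneg hs'1]
        calc ((i : ℝ) / ((m : ℝ) + 1)) * ‖v‖ ≤ 1 * r :=
            mul_le_mul hs'2 hvnorm (norm_nonneg _) zero_le_one
          _ = r := one_mul r
      have hfin1 : f (a + u) = q.eval (t : ℝ) := by
        have hsmul : ((t : ℝ)) • v = u := by
          rw [hv, smul_smul, mul_inv_cancel₀ htpos.ne', one_smul]
        have := hq t
        rw [hsmul] at this
        exact this
      have hfin0 : f a = q.eval 0 := by
        have := hq 0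
        simpa using this
      have habs : |(t : ℝ)| ≤ 1 := by rw [abs_of_pos htpos]; exact ht1'
      calc |f (a + u) - f a| = |q.eval (t : ℝ) - q.eval 0| := by rw [hfin1, hfin0]
        _ ≤ C * M * |(t : ℝ)| := hC q hqdeg M hnodes _ habs
        _ ≤ C * M * (2 * ‖u‖ / r) := by
            apply mul_le_mul_of_nonneg_left _ (by positivity)
            rw [abs_of_pos htpos]
            exact ht2.le
        _ = K * ‖u‖ := by rw [hK]; ring
  rw [Metric.continuousAt_iff]
  intro ε hε
  refine ⟨min (r / 2) (ε / (K + 1)), by positivity, ?_⟩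
  intro x hx
  have hx1 : ‖x - a‖ ≤ r / 2 := by
    rw [← dist_eq_norm]
    exact le_of_lt (lt_of_lt_of_le hx (min_le_left _ _))
  have hx2 : ‖x - a‖ < ε / (K + 1) := by
    rw [← dist_eq_norm]
    exact lt_of_lt_of_le hx (min_le_right _ _)
  have := key (x - a) hx1
  rw [add_sub_cancel] at this
  rw [Real.dist_eq]
  calc |f x - f a| ≤ K * ‖x - a‖ := this
    _ ≤ K * (ε / (K + 1)) := mul_le_mul_of_nonneg_left hx2.le hK0
    _ = ε * (K / (K + 1)) := by ring
    _ < ε * 1 := by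
        apply mul_lt_mul_of_pos_left _ hε
        rw [div_lt_one (by positivity)]
        linarith
    _ = ε := mul_one ε

end Continuity

section Bootstrap

variable {E : Type*} [NormedAddCommGroup E] [NormedSpace ℝ E]

lemma bootstrap_step {m : ℕ} {f : E → ℝ}
    (hd : ∀ v a : E, (Δ_[v])^[m + 1] f a = 0) (x₀ : E) (r M : ℝ) (hM : 0 ≤ M)
    (hb : ∀ y : E, dist y x₀ ≤ r → |f y| ≤ M) :
    ∀ y : E, dist y x₀ ≤ ((m : ℝ) + 2) / ((m : ℝ) + 1) * r → |f y| ≤ 2 ^ (m + 1) * M := by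
  intro aa haa
  have hm2 : (0:ℝ) < (m : ℝ) + 2 := by positivity
  have hm1 : (0:ℝ) < (m : ℝ) + 1 := by positivity
  set u : E := aa - x₀ with hu
  set h : E := (2 / ((m : ℝ) + 2)) • u with hh
  set y : E := x₀ + (-(m : ℝ) / ((m : ℝ) + 2)) • u with hy
  have hpt : ∀ k : ℕ, y + k • h = x₀ + ((-(m:ℝ) + 2 * k) / ((m:ℝ) + 2)) • u := by
    intro k
    rw [hy, hh, ← Nat.cast_smul_eq_nsmul ℝ k, smul_smul, add_assoc, ← add_smul]
    congr 2
    field_simp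
  have hya : y + (m + 1) • h = aa := by
    rw [hpt (m + 1)]
    have hco : (-(m:ℝ) + 2 * ((m:ℕ) + 1 : ℕ)) / ((m:ℝ) + 2) = 1 := by
      push_cast
      field_simp
      ring
    rw [hco, one_smul, hu, add_sub_cancel]
  have hid := hd h y
  rw [fwdDiff_iter_eq_sum_shift, Finset.sum_range_succ] at hid
  have hlast : ((-1 : ℤ) ^ (m + 1 - (m + 1)) * (m + 1).choose (m + 1)) • f (y + (m + 1) • h)
      = f aa := by
    rw [Nat.sub_self, pow_zero, Nat.choose_self, hya]
    norm_num
  rw [hlast] at hid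
  have hfa : f aa = -∑ k ∈ Finset.range (m + 1),
      ((-1 : ℤ) ^ (m + 1 - k) * (m + 1).choose k) • f (y + k • h) := by linarith
  have hptbound : ∀ k ∈ Finset.range (m + 1), |f (y + k • h)| ≤ M := by
    intro k hk
    have hk' : k ≤ m := Nat.lt_succ_iff.mp (Finset.mem_range.1 hk)
    apply hb
    rw [hpt k, dist_eq_norm, add_sub_cancel_left, norm_smul, Real.norm_eq_abs]
    have habs : |(-(m:ℝ) + 2 * k) / ((m:ℝ) + 2)| ≤ (m : ℝ) / ((m:ℝ) + 2) := by
      rw [abs_div, abs_of_pos hm2, div_le_div_iff_of_pos_right hm2]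
      rw [abs_le]
      constructor
      · have : (0:ℝ) ≤ 2 * k := by positivity
        linarith
      · have : (k : ℝ) ≤ (m : ℝ) := by exact_mod_cast hk'
        linarith
    have hunorm : ‖u‖ ≤ ((m:ℝ) + 2) / ((m:ℝ) + 1) * r := by
      rw [hu, ← dist_eq_norm]
      exact haa
    have hr0 : 0 ≤ ((m:ℝ) + 2) / ((m:ℝ) + 1) * r := le_trans dist_nonneg haa
    calc |(-(m:ℝ) + 2 * k) / ((m:ℝ) + 2)| * ‖u‖
        ≤ ((m : ℝ) / ((m:ℝ) + 2)) * (((m:ℝ) + 2) / ((m:ℝ) + 1) * r) :=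
          mul_le_mul habs hunorm (norm_nonneg _) (by positivity)
      _ = (m : ℝ) / ((m:ℝ) + 1) * r := by field_simp
      _ ≤ 1 * r := by
          have hrr : 0 ≤ r := by
            have hrw : r = (((m:ℝ)+1)/((m:ℝ)+2)) * (((m:ℝ)+2)/((m:ℝ)+1) * r) := by
              field_simp
            rw [hrw]
            exact mul_nonneg (by positivity) hr0
          apply mul_le_mul_of_nonneg_right _ hrr
          rw [div_le_one hm1]; linarith
      _ = r := one_mul r
  have hsum : (∑ k ∈ Finset.range (m + 1), ((m + 1).choose k : ℝ)) ≤ 2 ^ (m + 1) := by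
    have h2 : ∑ k ∈ Finset.range (m + 2), ((m + 1).choose k : ℝ) = 2 ^ (m + 1) := by
      rw [← Nat.cast_sum]
      rw [Nat.sum_range_choose (m + 1)]
      push_cast
      ring
    rw [Finset.sum_range_succ] at h2
    have : (0:ℝ) ≤ ((m + 1).choose (m + 1) : ℝ) := by positivity
    linarith
  rw [hfa, abs_neg]
  calc |∑ k ∈ Finset.range (m + 1), ((-1 : ℤ) ^ (m + 1 - k) * (m + 1).choose k) • f (y + k • h)|
      ≤ ∑ k ∈ Finset.range (m + 1),
        |((-1 : ℤ) ^ (m + 1 - k) * (m + 1).choose k) • f (y + k • h)| :=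
        Finset.abs_sum_le_sum_abs _ _
    _ ≤ ∑ k ∈ Finset.range (m + 1), ((m + 1).choose k : ℝ) * M := by
        apply Finset.sum_le_sum
        intro k hk
        rw [zsmul_eq_mul, abs_mul]
        have hcoef : |(((-1 : ℤ) ^ (m + 1 - k) * (m + 1).choose k : ℤ) : ℝ)|
            = ((m + 1).choose k : ℝ) := by
          push_cast
          rw [abs_mul, abs_pow, abs_neg, abs_one, one_pow, one_mul, abs_of_nonneg (by positivity)]
        rw [hcoef]
        exact mul_le_mul_of_nonneg_left (hptbound k hk) (by positivity)
    _ = (∑ k ∈ Finset.range (m + 1), ((m + 1).choose k : ℝ)) * M := by rw [Finset.sum_mul]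
    _ ≤ 2 ^ (m + 1) * M := mul_le_mul_of_nonneg_right hsum hM

lemma bounded_on_balls {m : ℕ} {f : E → ℝ}
    (hd : ∀ v a : E, (Δ_[v])^[m + 1] f a = 0) {x₀ : E} (hc : ContinuousAt f x₀) :
    ∀ R : ℝ, ∃ M : ℝ, ∀ y : E, dist y x₀ ≤ R → |f y| ≤ M := by
  obtain ⟨δ, hδ, hδball⟩ := Metric.continuousAt_iff.1 hc 1 one_pos
  set M₀ : ℝ := |f x₀| + 1 with hM₀def
  have hM₀pos : 0 ≤ M₀ := by positivity
  have hbase : ∀ y : E, dist y x₀ ≤ δ / 2 → |f y| ≤ M₀ := by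
    intro y hyd
    have : dist (f y) (f x₀) < 1 := hδball (lt_of_le_of_lt hyd (by linarith))
    rw [Real.dist_eq] at this
    calc |f y| = |f x₀ + (f y - f x₀)| := by ring_nf
      _ ≤ |f x₀| + |f y - f x₀| := abs_add_le _ _
      _ ≤ M₀ := by rw [hM₀def]; linarith [abs_sub_comm (f y) (f x₀) ▸ this]
  set lam : ℝ := ((m : ℝ) + 2) / ((m : ℝ) + 1) with hlam
  have hlam1 : 1 < lam := by
    rw [hlam, lt_div_iff₀ (by positivity)]
    linarith
  have iter : ∀ j : ℕ, ∀ y : E, dist y x₀ ≤ lam ^ j * (δ / 2) →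
      |f y| ≤ (2 ^ (m + 1)) ^ j * M₀ := by
    intro j
    induction j with
    | zero => intro y hyd; simpa using hbase y (by simpa using hyd)
    | succ j IH =>
      intro y hyd
      have hstep := bootstrap_step hd x₀ (lam ^ j * (δ / 2)) ((2 ^ (m + 1)) ^ j * M₀)
        (by positivity) IH
      have harg : dist y x₀ ≤ lam * (lam ^ j * (δ / 2)) := by
        rw [← mul_assoc, ← pow_succ']
        exact hyd
      have := hstep y (by rw [hlam] at harg ⊢; exact harg)
      calc |f y| ≤ 2 ^ (m + 1) * ((2 ^ (m + 1)) ^ j * M₀) := this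
        _ = (2 ^ (m + 1)) ^ (j + 1) * M₀ := by rw [pow_succ']; ring
  intro R
  obtain ⟨j, hj⟩ := pow_unbounded_of_one_lt (R / (δ / 2)) hlam1
  refine ⟨(2 ^ (m + 1)) ^ j * M₀, fun y hyd => iter j y ?_⟩
  have : R ≤ lam ^ j * (δ / 2) := by
    rw [div_lt_iff₀ (by linarith)] at hj
    linarith
  linarith

lemma continuous_everywhere {m : ℕ} {f : E → ℝ}
    (hd : ∀ v a : E, (Δ_[v])^[m + 1] f a = 0) {x₀ : E} (hc : ContinuousAt f x₀) :
    Continuous f := by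
  rw [continuous_iff_continuousAt]
  intro a
  obtain ⟨M, hM⟩ := bounded_on_balls hd hc (dist a x₀ + 1)
  apply continuousAt_of_bounded hd a 1 M one_pos
  intro y hy
  apply hM
  calc dist y x₀ ≤ dist y a + dist a x₀ := dist_triangle _ _ _
    _ ≤ dist a x₀ + 1 := by linarith

lemma line_poly_real {m : ℕ} {f : E → ℝ}
    (hd : ∀ v a : E, (Δ_[v])^[m + 1] f a = 0) (hcont : Continuous f) (a v : E) :
    ∃ q : Polynomial ℝ, q.natDegree ≤ m ∧ ∀ t : ℝ, f (a + t • v) = q.eval t := by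
  obtain ⟨q, h1, h2⟩ := line_poly_rat hd a v
  refine ⟨q, h1, ?_⟩
  have hfun : (fun t : ℝ => f (a + t • v)) = fun t : ℝ => q.eval t := by
    apply Continuous.ext_on (Rat.denseRange_cast (𝕜 := ℝ))
    · exact hcont.comp (by continuity)
    · exact q.continuous
    · rintro _ ⟨t, rfl⟩
      exact h2 t
  exact fun t => congrFun hfun t

end Bootstrap

section Assembly

/-- node values `0, 1, ..., m` as reals -/
noncomputable def nodeR (m : ℕ) (c : Fin (m + 1)) : ℝ := ((c : ℕ) : ℝ)

lemma nodeR_injOn (m : ℕ) : Set.InjOn (nodeR m) ↑(Finset.univ : Finset (Fin (m + 1))) := by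
  intro a _ b _ h
  simp only [nodeR] at h
  exact Fin.ext (by exact_mod_cast h)

/-- 1-variable Lagrange basis polynomial at the nodes `0, ..., m`. -/
noncomputable def lag (m : ℕ) (c : Fin (m + 1)) : Polynomial ℝ :=
  Lagrange.basis Finset.univ (nodeR m) c

lemma lag_natDegree (m : ℕ) (c : Fin (m + 1)) : (lag m c).natDegree = m := by
  rw [lag, Lagrange.natDegree_basis (nodeR_injOn m) (Finset.mem_univ c)]
  simp

lemma lag_eval_self (m : ℕ) (c : Fin (m + 1)) : (lag m c).eval (nodeR m c) = 1 :=
  Lagrange.eval_basis_self (nodeR_injOn m) (Finset.mem_univ c)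

lemma lag_eval_ne (m : ℕ) {c c' : Fin (m + 1)} (h : c ≠ c') :
    (lag m c).eval (nodeR m c') = 0 :=
  Lagrange.eval_basis_of_ne h (Finset.mem_univ c')

lemma eval_aeval_X {n : ℕ} (x : Fin n → ℝ) (i : Fin n) (p : Polynomial ℝ) :
    MvPolynomial.eval x (Polynomial.aeval (MvPolynomial.X i : MvPolynomial (Fin n) ℝ) p)
      = p.eval (x i) := by
  have h := Polynomial.aeval_algHom_apply (MvPolynomial.aeval (R := ℝ) x) (MvPolynomial.X i) p
  rw [MvPolynomial.aeval_X] at h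
  have h2 : (MvPolynomial.aeval x) (Polynomial.aeval (MvPolynomial.X i : MvPolynomial (Fin n) ℝ) p)
      = MvPolynomial.eval x (Polynomial.aeval (MvPolynomial.X i : MvPolynomial (Fin n) ℝ) p) := by
    rw [← MvPolynomial.coe_aeval_eq_eval]
    rfl
  rw [h2] at h
  rw [← h]
  rw [← Polynomial.coe_aeval_eq_eval]

/-- The tensor-Lagrange interpolation polynomial of `f` on the grid `{0,…,m}^n`. -/
noncomputable def interpMv (n m : ℕ) (f : (Fin n → ℝ) → ℝ) : MvPolynomial (Fin n) ℝ :=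
  ∑ α : Fin n → Fin (m + 1), MvPolynomial.C (f (fun i => nodeR m (α i))) *
    ∏ i, Polynomial.aeval (MvPolynomial.X i) (lag m (α i))

lemma interpMv_eval (n m : ℕ) (f : (Fin n → ℝ) → ℝ) (x : Fin n → ℝ) :
    MvPolynomial.eval x (interpMv n m f) = ∑ α : Fin n → Fin (m + 1),
      f (fun i => nodeR m (α i)) * ∏ i, (lag m (α i)).eval (x i) := by
  rw [interpMv, map_sum]
  apply Finset.sum_congr rfl
  intro α _
  rw [map_mul, MvPolynomial.eval_C, map_prod]
  congr 1
  apply Finset.prod_congr rfl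
  intro i _
  exact eval_aeval_X x i _

lemma f_eq_interpMv {n m : ℕ} {f : (Fin n → ℝ) → ℝ}
    (hd : ∀ v a : Fin n → ℝ, (Δ_[v])^[m + 1] f a = 0) (hcont : Continuous f) :
    ∀ x : Fin n → ℝ, f x = MvPolynomial.eval x (interpMv n m f) := by
  have claim : ∀ j : ℕ, ∀ x : Fin n → ℝ,
      (∀ i : Fin n, j ≤ (i : ℕ) → ∃ c : Fin (m + 1), x i = nodeR m c) →
      f x = MvPolynomial.eval x (interpMv n m f) := by
    intro j
    induction j with
    | zero =>
      intro x hx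
      have hall : ∀ i : Fin n, ∃ c : Fin (m + 1), x i = nodeR m c :=
        fun i => hx i (Nat.zero_le _)
      choose β hβ using hall
      have hxβ : x = fun i => nodeR m (β i) := funext hβ
      rw [interpMv_eval]
      rw [Finset.sum_eq_single_of_mem β (Finset.mem_univ β)]
      · have hprod : ∀ i : Fin n, (lag m (β i)).eval (x i) = 1 := by
          intro i
          rw [hβ i]
          exact lag_eval_self m (β i)
        rw [Finset.prod_congr rfl (fun i _ => hprod i), Finset.prod_const_one, mul_one, hxβ]
      · intro α _ hαβ
        obtain ⟨i, hi⟩ := Function.ne_iff.1 hαβ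
        have : (lag m (α i)).eval (x i) = 0 := by
          rw [hβ i]
          exact lag_eval_ne m hi
        rw [Finset.prod_eq_zero (Finset.mem_univ i) this, mul_zero]
    | succ j IH =>
      intro x hx
      by_cases hjn : j < n
      · set J : Fin n := ⟨j, hjn⟩ with hJ
        have hupd : ∀ c : Fin (m + 1),
            f (Function.update x J (nodeR m c))
              = MvPolynomial.eval (Function.update x J (nodeR m c)) (interpMv n m f) := by
          intro c
          apply IH
          intro i hi
          by_cases hiJ : i = J
          · exact ⟨c, by rw [hiJ, Function.update_self]⟩
          · have hi' : j + 1 ≤ (i : ℕ) := by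
              rcases Nat.lt_or_ge (i : ℕ) (j + 1) with h | h
              · exfalso
                apply hiJ
                apply Fin.ext
                simp only [hJ]
                omega
              · exact h
            obtain ⟨c', hc'⟩ := hx i hi'
            exact ⟨c', by rw [Function.update_of_ne hiJ]; exact hc'⟩
        obtain ⟨q, hqdeg, hq⟩ := line_poly_real hd hcont (Function.update x J 0) (Pi.single J 1 : Fin n → ℝ)
        have haff : ∀ t : ℝ, Function.update x J 0 + t • (Pi.single J 1 : Fin n → ℝ)
            = Function.update x J t := by
          intro t
          funext i
          by_cases hiJ : i = J
          · subst hiJ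
            simp
          · simp [Function.update_of_ne hiJ, Pi.single_eq_of_ne hiJ]
        have hq' : ∀ t : ℝ, f (Function.update x J t) = q.eval t := by
          intro t
          rw [← haff t]
          exact hq t
        set Qx : Polynomial ℝ := ∑ α : Fin n → Fin (m + 1),
          (f (fun i => nodeR m (α i)) *
            ∏ i ∈ Finset.univ.erase J, (lag m (α i)).eval (x i)) • lag m (α J) with hQx
        have hQdeg : Qx.natDegree ≤ m := by
          rw [hQx]
          refine le_trans (Polynomial.natDegree_sum_le _ _) ?_
          refine (Finset.fold_max_le m).2 ⟨by omega, ?_⟩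
          intro α _
          simp only [Function.comp_apply]
          refine le_trans (Polynomial.natDegree_smul_le _ _) ?_
          rw [lag_natDegree]
        have hQeval : ∀ t : ℝ,
            MvPolynomial.eval (Function.update x J t) (interpMv n m f) = Qx.eval t := by
          intro t
          rw [interpMv_eval, hQx, Polynomial.eval_finset_sum]
          apply Finset.sum_congr rfl
          intro α _
          rw [Polynomial.eval_smul, smul_eq_mul]
          have hsplit : ∏ i, (lag m (α i)).eval (Function.update x J t i)
              = (lag m (α J)).eval t *
                ∏ i ∈ Finset.univ.erase J, (lag m (α i)).eval (x i) := by
            rw [← Finset.mul_prod_erase Finset.univ _ (Finset.mem_univ J)]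
            rw [Function.update_self]
            congr 1
            apply Finset.prod_congr rfl
            intro i hi
            rw [Function.update_of_ne (Finset.ne_of_mem_erase hi)]
          rw [hsplit]
          ring
        have hnode : ∀ c ∈ (Finset.univ : Finset (Fin (m + 1))),
            q.eval (nodeR m c) = Qx.eval (nodeR m c) := by
          intro c _
          rw [← hq' (nodeR m c), ← hQeval (nodeR m c)]
          exact hupd c
        have hcard : ((Finset.univ : Finset (Fin (m + 1))).card : WithBot ℕ) = (m + 1 : ℕ) := by
          simp
        have hdq : q.degree < ((Finset.univ : Finset (Fin (m + 1))).card : WithBot ℕ) := by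
          rw [hcard]
          refine lt_of_le_of_lt Polynomial.degree_le_natDegree ?_
          exact_mod_cast lt_of_le_of_lt hqdeg (by omega)
        have hdQ : Qx.degree < ((Finset.univ : Finset (Fin (m + 1))).card : WithBot ℕ) := by
          rw [hcard]
          refine lt_of_le_of_lt Polynomial.degree_le_natDegree ?_
          exact_mod_cast lt_of_le_of_lt hQdeg (by omega)
        have heqpoly : q = Qx :=
          Polynomial.eq_of_degrees_lt_of_eval_index_eq _ (nodeR_injOn m) hdq hdQ hnode
        have h1 := hq' (x J)
        rw [Function.update_eq_self] at h1
        have h2 := hQeval (x J)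
        rw [Function.update_eq_self] at h2
        rw [h1, heqpoly, ← h2]
      · apply IH
        intro i hi
        exfalso
        have := i.isLt
        omega
  intro x
  exact claim n x (fun i hi => absurd i.isLt (by omega))

end Assembly

section Degree

lemma homog_eval_smul {n : ℕ} {p : MvPolynomial (Fin n) ℝ} {d : ℕ}
    (hp : p.IsHomogeneous d) (t : ℝ) (v : Fin n → ℝ) :
    MvPolynomial.eval (t • v) p = t ^ d * MvPolynomial.eval v p := by
  rw [MvPolynomial.eval_eq', MvPolynomial.eval_eq', Finset.mul_sum]
  apply Finset.sum_congr rfl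
  intro α hα
  have hdeg : ∑ i, α i = d := by
    have h1 := hp (MvPolynomial.mem_support_iff.1 hα)
    simp only [Finsupp.weight_apply, Pi.one_apply, smul_eq_mul, mul_one, Finsupp.sum] at h1
    rw [← h1]
    symm
    apply Finset.sum_subset (Finset.subset_univ _)
    intro i _ hi
    exact Finsupp.notMem_support_iff.1 hi
  have hprod : ∏ i, ((t • v) i) ^ α i = t ^ d * ∏ i, (v i) ^ α i := by
    have : ∀ i : Fin n, ((t • v) i) ^ α i = t ^ α i * (v i) ^ α i := by
      intro i
      rw [Pi.smul_apply, smul_eq_mul, mul_pow]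
    rw [Finset.prod_congr rfl (fun i _ => this i), Finset.prod_mul_distrib,
      Finset.prod_pow_eq_pow_sum, hdeg]
  rw [hprod]
  ring

lemma totalDegree_cleanup {n m : ℕ} (P : MvPolynomial (Fin n) ℝ)
    (hline : ∀ v : Fin n → ℝ, ∃ q : Polynomial ℝ, q.natDegree ≤ m ∧
      ∀ t : ℝ, MvPolynomial.eval (t • v) P = q.eval t) :
    ∃ P' : MvPolynomial (Fin n) ℝ, P'.totalDegree ≤ m ∧
      ∀ x : Fin n → ℝ, MvPolynomial.eval x P' = MvPolynomial.eval x P := by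
  set D := P.totalDegree with hD
  have hzero : ∀ d : ℕ, m < d → MvPolynomial.homogeneousComponent d P = 0 := by
    intro d hd
    by_cases hdD : d ≤ D
    · apply (MvPolynomial.homogeneousComponent_isHomogeneous d P).eq_zero_of_forall_eval_eq_zero
      intro v
      obtain ⟨q, hq, hqe⟩ := hline v
      set A : Polynomial ℝ := ∑ e ∈ Finset.range (D + 1),
        Polynomial.C (MvPolynomial.eval v (MvPolynomial.homogeneousComponent e P)) *
          Polynomial.X ^ e with hA
      have hAe : ∀ t : ℝ, A.eval t = MvPolynomial.eval (t • v) P := by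
        intro t
        conv_rhs => rw [← MvPolynomial.sum_homogeneousComponent P]
        rw [map_sum, hA, Polynomial.eval_finset_sum]
        apply Finset.sum_congr rfl
        intro e _
        rw [Polynomial.eval_mul, Polynomial.eval_C, Polynomial.eval_pow, Polynomial.eval_X,
          homog_eval_smul (MvPolynomial.homogeneousComponent_isHomogeneous e P) t v]
        ring
      have hAq : A = q := by
        apply Polynomial.eq_of_infinite_eval_eq
        have huniv : {x : ℝ | A.eval x = q.eval x} = Set.univ := by
          apply Set.eq_univ_of_forall
          intro t
          simp only [Set.mem_setOf_eq]
          rw [hAe t, hqe t]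
        rw [huniv]
        exact Set.infinite_univ
      have hcoeff : A.coeff d = MvPolynomial.eval v (MvPolynomial.homogeneousComponent d P) := by
        rw [hA, Polynomial.finset_sum_coeff]
        rw [Finset.sum_eq_single d]
        · rw [Polynomial.coeff_C_mul, Polynomial.coeff_X_pow, if_pos rfl, mul_one]
        · intro e _ he
          rw [Polynomial.coeff_C_mul, Polynomial.coeff_X_pow, if_neg (Ne.symm he), mul_zero]
        · intro hd'
          exact absurd (Finset.mem_range.2 (by omega)) hd'
      have hzero' : A.coeff d = 0 := by
        rw [hAq]
        exact Polynomial.coeff_eq_zero_of_natDegree_lt (lt_of_le_of_lt hq hd)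
      rw [← hcoeff]
      exact hzero'
    · exact MvPolynomial.homogeneousComponent_eq_zero d P (by omega)
  refine ⟨∑ e ∈ Finset.range (m + 1), MvPolynomial.homogeneousComponent e P, ?_, ?_⟩
  · refine le_trans (MvPolynomial.totalDegree_finset_sum _ _) ?_
    apply Finset.sup_le
    intro e he
    refine le_trans (MvPolynomial.homogeneousComponent_isHomogeneous e P).totalDegree_le ?_
    exact Nat.lt_succ_iff.1 (Finset.mem_range.1 he)
  · intro x
    have hsums : ∑ e ∈ Finset.range (m + 1), MvPolynomial.homogeneousComponent e P
        = ∑ e ∈ Finset.range (D + 1), MvPolynomial.homogeneousComponent e P := by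
      have h1 : ∑ e ∈ Finset.range (m + 1), MvPolynomial.homogeneousComponent e P
          = ∑ e ∈ Finset.range (max m D + 1), MvPolynomial.homogeneousComponent e P := by
        apply Finset.sum_subset (Finset.range_subset_range.2 (by omega))
        intro e _ he
        exact hzero e (by simp only [Finset.mem_range, not_lt] at he; omega)
      have h2 : ∑ e ∈ Finset.range (D + 1), MvPolynomial.homogeneousComponent e P
          = ∑ e ∈ Finset.range (max m D + 1), MvPolynomial.homogeneousComponent e P := by
        apply Finset.sum_subset (Finset.range_subset_range.2 (by omega))
        intro e _ he
        exact MvPolynomial.homogeneousComponent_eq_zero e P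
          (by simp only [Finset.mem_range, not_lt] at he; omega)
      rw [h1, h2]
    rw [hsums, MvPolynomial.sum_homogeneousComponent]

end Degree

/-- (Aichinger-type corollary.) Let `f : ℝ^{k+1} → ℝ` satisfy
`f(x₁ + ⋯ + x_{m+1}) = Σᵢ gᵢ(x₁, …, x̂ᵢ, …, x_{m+1})`, where each `gᵢ` does not depend on the
`i`-th variable. If `f` is continuous at some point, then `f` is an ordinary polynomial in
`k+1` variables of total degree at most `m`. -/
theorem statement10 (k m : ℕ) (f : (Fin (k + 1) → ℝ) → ℝ)
    (g : Fin (m + 1) → (Fin (m + 1) → Fin (k + 1) → ℝ) → ℝ)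
    (hg : ∀ (i : Fin (m + 1)) (x y : Fin (m + 1) → Fin (k + 1) → ℝ),
      (∀ j : Fin (m + 1), j ≠ i → x j = y j) → g i x = g i y)
    (heq : ∀ x : Fin (m + 1) → Fin (k + 1) → ℝ, f (∑ j, x j) = ∑ i, g i x)
    (x₀ : Fin (k + 1) → ℝ) (hcont : ContinuousAt f x₀) :
    ∃ p : MvPolynomial (Fin (k + 1)) ℝ,
      p.totalDegree ≤ m ∧ ∀ v : Fin (k + 1) → ℝ, f v = MvPolynomial.eval v p := by
  have hd : ∀ v a : Fin (k + 1) → ℝ, (Δ_[v])^[m + 1] f a = 0 :=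
    aich_fwdDiff_zero m f g hg heq
  have hcont' : Continuous f := continuous_everywhere hd hcont
  have hfe : ∀ x : Fin (k + 1) → ℝ, f x = MvPolynomial.eval x (interpMv (k + 1) m f) :=
    f_eq_interpMv hd hcont'
  have hline : ∀ v : Fin (k + 1) → ℝ, ∃ q : Polynomial ℝ, q.natDegree ≤ m ∧
      ∀ t : ℝ, MvPolynomial.eval (t • v) (interpMv (k + 1) m f) = q.eval t := by
    intro v
    obtain ⟨q, hq1, hq2⟩ := line_poly_real hd hcont' 0 v
    refine ⟨q, hq1, fun t => ?_⟩
    rw [← hfe (t • v)]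
    have := hq2 t
    rw [zero_add] at this
    exact this
  obtain ⟨P', hP'deg, hP'⟩ := totalDegree_cleanup (interpMv (k + 1) m f) hline
  refine ⟨P', hP'deg, fun v => ?_⟩
  rw [hfe v, hP' v]
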